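/- The cardinality of V_n, the set of vectors (a_1,…,a_n) with a_1 = 2 and 2 ≤ a_i ≤ a_{i−1}+1 for 2 ≤ i ≤ n, equals the Catalan number c_n = C(2n,n)/(n+1). -/

import Mathlib

open Finset

/-- The set `V_n` of integer vectors `(a_1, …, a_n)` with `a_1 = 2` and
`2 ≤ a_i ≤ a_{i-1} + 1` for `2 ≤ i ≤ n` (indices here are `0`-based). -/
def Vset (n : ℕ) : Finset (Fin n → ℕ) :=
  (Fintype.piFinset fun _ : Fin n => Finset.Icc 2 (n + 1)).filter
    (fun a => (∀ i : Fin n, (i : ℕ) = 0 → a i = 2) ∧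
      ∀ i j : Fin n, (j : ℕ) + 1 = (i : ℕ) → 2 ≤ a i ∧ a i ≤ a j + 1)

/-- Ballot-type counting function. -/
def fcat : ℕ → ℕ → ℕ
  | 0, _ => 1
  | n + 1, k => ∑ j ∈ Finset.range (k + 1), fcat n (j + 1)

/-- Sequences `b` with `b 0 ≤ k` and `b (i+1) ≤ b i + 1`. -/
def Sset (n k : ℕ) : Finset (Fin n → ℕ) :=
  (Fintype.piFinset fun _ : Fin n => Finset.range (k + n + 1)).filter
    (fun b => (∀ i : Fin n, (i : ℕ) = 0 → b i ≤ k) ∧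
      ∀ i j : Fin n, (j : ℕ) + 1 = (i : ℕ) → b i ≤ b j + 1)

lemma bval_le {n k : ℕ} {b : Fin n → ℕ}
    (h0 : ∀ i : Fin n, (i : ℕ) = 0 → b i ≤ k)
    (hadj : ∀ i j : Fin n, (j : ℕ) + 1 = (i : ℕ) → b i ≤ b j + 1) :
    ∀ i : Fin n, b i ≤ k + (i : ℕ) := by
  intro i
  induction' hm : (i : ℕ) with m ih generalizing i
  · simpa using h0 i hm
  · have hlt : m < n := by have := i.isLt; omega
    have h1 := hadj i ⟨m, hlt⟩ (by simp [hm])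
    have h2 := ih ⟨m, hlt⟩ rfl
    omega

lemma mem_Sset {n k : ℕ} {b : Fin n → ℕ} :
    b ∈ Sset n k ↔ (∀ i : Fin n, (i : ℕ) = 0 → b i ≤ k) ∧
      ∀ i j : Fin n, (j : ℕ) + 1 = (i : ℕ) → b i ≤ b j + 1 := by
  simp only [Sset, Finset.mem_filter, Fintype.mem_piFinset, Finset.mem_range]
  constructor
  · rintro ⟨-, h⟩; exact h
  · intro h
    refine ⟨fun i => ?_, h⟩
    have := bval_le h.1 h.2 i
    have := i.isLt
    omega

lemma Sset_card (n : ℕ) : ∀ k, (Sset n k).card = fcat n k := by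
  induction n with
  | zero =>
    intro k
    rw [show fcat 0 k = 1 from rfl]
    rw [Finset.card_eq_one]
    refine ⟨fun i => i.elim0, ?_⟩
    rw [Finset.eq_singleton_iff_unique_mem]
    constructor
    · rw [mem_Sset]
      exact ⟨fun i => i.elim0, fun i => i.elim0⟩
    · intro b _; funext i; exact i.elim0
  | succ n ih =>
    intro k
    have hset : Sset (n + 1) k = (Finset.range (k + 1)).biUnion
        (fun j => (Sset n (j + 1)).image (Fin.cons j)) := by
      ext b
      simp only [Finset.mem_biUnion, Finset.mem_range, Finset.mem_image]
      constructor
      · intro hb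
        rw [mem_Sset] at hb
        obtain ⟨h0, hadj⟩ := hb
        refine ⟨b 0, by have := h0 0 rfl; omega, Fin.tail b, ?_, Fin.cons_self_tail b⟩
        rw [mem_Sset]
        constructor
        · intro i hi
          have := hadj i.succ 0 (by simp [hi])
          simpa [Fin.tail] using this
        · intro i j hij
          have := hadj i.succ j.succ (by simp; omega)
          simpa [Fin.tail] using this
      · rintro ⟨j, hj, t, ht, rfl⟩
        rw [mem_Sset] at ht
        obtain ⟨ht0, htadj⟩ := ht
        rw [mem_Sset]
        constructor
        · intro i hi
          have : i = 0 := Fin.ext hi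
          subst this
          rw [Fin.cons_zero]
          omega
        · rintro ⟨iv, hiv⟩ ⟨jv, hjv⟩ hij
          simp only [] at hij
          subst hij
          have hlt : jv < n := by omega
          have e1 : (⟨jv + 1, hiv⟩ : Fin (n + 1)) = Fin.succ ⟨jv, hlt⟩ := Fin.ext rfl
          rw [e1, Fin.cons_succ]
          rcases jv with _ | m
          · have e2 : (⟨0, hjv⟩ : Fin (n + 1)) = 0 := Fin.ext rfl
            rw [e2, Fin.cons_zero]
            exact ht0 ⟨0, hlt⟩ rfl
          · have hlt2 : m < n := by omega
            have e3 : (⟨m + 1, hjv⟩ : Fin (n + 1)) = Fin.succ ⟨m, hlt2⟩ := Fin.ext rfl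
            rw [e3, Fin.cons_succ]
            exact htadj ⟨m + 1, hlt⟩ ⟨m, hlt2⟩ rfl
    rw [hset, Finset.card_biUnion, show fcat (n+1) k = ∑ j ∈ Finset.range (k+1), fcat n (j+1) from rfl]
    · refine Finset.sum_congr rfl fun j _ => ?_
      have hinj : Function.Injective (Fin.cons (α := fun _ : Fin (n + 1) => ℕ) j) := by
        intro t t' h
        funext i
        have := congrFun h i.succ
        simpa [Fin.cons_succ] using this
      rw [Finset.card_image_of_injective _ hinj, ih]
    · intro x _ y _ hxy
      rw [Function.onFun, Finset.disjoint_left]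
      rintro b hbx hby
      apply hxy
      simp only [Finset.mem_image] at hbx hby
      obtain ⟨t, -, rfl⟩ := hbx
      obtain ⟨t', -, he⟩ := hby
      have := congrFun he 0
      simpa [Fin.cons_zero] using this.symm

lemma key (n : ℕ) : ∀ k, (n + k + 1) * fcat n k = (k + 1) * Nat.choose (2 * n + k) n := by
  induction n with
  | zero => intro k; simp [fcat]
  | succ n ih =>
    intro k
    induction k with
    | zero =>
      have h1 := ih 1
      have hsymm : Nat.choose (2*n+1) (n+1) = Nat.choose (2*n+1) n := by
        have := Nat.choose_symm (n := 2*n+1) (k := n) (by omega)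
        simpa [show 2*n+1-n = n+1 by omega] using this
      have h2 : Nat.choose (2*(n+1)) (n+1) = 2 * Nat.choose (2*n+1) n := by
        rw [show 2*(n+1) = (2*n+1)+1 by ring, Nat.choose_succ_succ, hsymm]
        omega
      rw [show fcat (n+1) 0 = fcat n 1 by simp [fcat]]
      rw [show 2*(n+1)+0 = 2*(n+1) by ring, h2]
      zify at h1 ⊢
      linear_combination h1
    | succ k hk =>
      have ih2 := ih (k + 2)
      have pascal : Nat.choose (2*n+k+3) (n+1)
          = Nat.choose (2*n+k+2) n + Nat.choose (2*n+k+2) (n+1) := by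
        rw [show 2*n+k+3 = (2*n+k+2)+1 by ring, Nat.choose_succ_succ]
      have hA : Nat.choose (2*n+k+2) (n+1) * (n+1)
          = Nat.choose (2*n+k+2) n * (n+k+2) := by
        have := Nat.choose_succ_right_eq (2*n+k+2) n
        simpa [show 2*n+k+2-n = n+k+2 by omega] using this
      have hmul : (n+k+2) * ((n+k+1+2) * fcat (n+1) (k+1))
          = (n+k+2) * ((k+1+1) * Nat.choose (2*(n+1)+(k+1)) (n+1)) := by
        rw [show fcat (n+1) (k+1) = fcat (n+1) k + fcat n (k+2) by
          rw [show fcat (n+1) (k+1) = ∑ j ∈ Finset.range (k+2), fcat n (j+1) from rfl,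
            Finset.sum_range_succ]; rfl]
        rw [show 2*(n+1)+(k+1) = 2*n+k+3 by ring]
        rw [show 2*(n+1)+k = 2*n+k+2 by ring] at hk
        rw [show 2*n+(k+2) = 2*n+k+2 by ring] at ih2
        zify at hk ih2 pascal hA ⊢
        linear_combination (n+k+3) * hk + (n+k+2) * ih2 - (n+k+2)*(k+2) * pascal - hA
      have hpos : 0 < n + k + 2 := by omega
      have := Nat.eq_of_mul_eq_mul_left hpos hmul
      convert this using 2; omega
lemma Vset_two_le {n : ℕ} {a : Fin n → ℕ}
    (h0 : ∀ i : Fin n, (i : ℕ) = 0 → a i = 2)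
    (hadj : ∀ i j : Fin n, (j : ℕ) + 1 = (i : ℕ) → 2 ≤ a i ∧ a i ≤ a j + 1) :
    ∀ i : Fin n, 2 ≤ a i := by
  intro i
  by_cases hz : (i : ℕ) = 0
  · exact (h0 i hz).ge
  · have hlt : (i : ℕ) - 1 < n := by have := i.isLt; omega
    exact (hadj i ⟨(i : ℕ) - 1, hlt⟩ (by simp; omega)).1

lemma mem_Vset {n : ℕ} {a : Fin n → ℕ} :
    a ∈ Vset n ↔ (∀ i : Fin n, (i : ℕ) = 0 → a i = 2) ∧
      ∀ i j : Fin n, (j : ℕ) + 1 = (i : ℕ) → 2 ≤ a i ∧ a i ≤ a j + 1 := by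
  simp only [Vset, Finset.mem_filter, Fintype.mem_piFinset, Finset.mem_Icc]
  constructor
  · rintro ⟨-, h⟩; exact h
  · intro h
    refine ⟨fun i => ⟨Vset_two_le h.1 h.2 i, ?_⟩, h⟩
    have := bval_le (k := 2) (fun i hi => (h.1 i hi).le) (fun i j hij => (h.2 i j hij).2) i
    have := i.isLt
    omega

lemma Vset_card_eq (n : ℕ) : (Vset n).card = (Sset n 0).card := by
  apply Finset.card_bij' (fun a _ => fun i => a i - 2) (fun b _ => fun i => b i + 2)
  · intro a ha
    rw [mem_Vset] at ha
    have h2 := Vset_two_le ha.1 ha.2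
    funext i
    have := h2 i
    simp
    omega
  · intro b _
    funext i
    simp
  · intro a ha
    rw [mem_Vset] at ha
    rw [mem_Sset]
    have h2 := Vset_two_le ha.1 ha.2
    constructor
    · intro i hi; rw [ha.1 i hi]
    · intro i j hij
      have := (ha.2 i j hij).2
      have := h2 j
      omega
  · intro b hb
    rw [mem_Sset] at hb
    rw [mem_Vset]
    constructor
    · intro i hi; have := hb.1 i hi; omega
    · intro i j hij
      have := hb.2 i j hij
      omega

theorem Vset_card_eq_catalan :
    ∀ n : ℕ, (Vset n).card = Nat.choose (2 * n) n / (n + 1) := by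
  intro n
  have h := key n 0
  norm_num at h
  rw [Vset_card_eq, Sset_card, ← h, Nat.mul_div_cancel_left _ (by omega)]
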